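/- Let β ∈ (0,1), q ∈ (0,1], δ := β·q, Q_b > 0, μ_s > 0, S := 1 + 1/δ + δ·Q_b/μ_s, λ* := (S − √(S² − 4/δ))/2 and P_b := Q_b/(1 − λ*). Then the closed-loop eigenvalue produced by the optimal Riccati feedback equals the stable Hamiltonian root: 1/δ − P_b/(μ_s + δ·P_b) = λ*. -/

import Mathlib

/-- The closed-loop eigenvalue produced by the optimal Riccati
feedback equals the stable Hamiltonian root: 1/δ − P_b/(μ_s + δ·P_b) = λ*. -/
theorem closed_loop_eigenvalue_eq_stable_root
    (β q Qb μs δ S lamStar Pb : ℝ)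
    (hβ0 : 0 < β) (hβ1 : β < 1) (hq0 : 0 < q) (hq1 : q ≤ 1)
    (hδ : δ = β * q) (hQb : 0 < Qb) (hμs : 0 < μs)
    (hS : S = 1 + 1/δ + δ * Qb / μs)
    (hlamStar : lamStar = (S - Real.sqrt (S ^ 2 - 4 / δ)) / 2)
    (hPb : Pb = Qb / (1 - lamStar)) :
    1 / δ - Pb / (μs + δ * Pb) = lamStar := by
  have hδ0 : 0 < δ := by rw [hδ]; positivity
  have hδne : δ ≠ 0 := ne_of_gt hδ0
  have hμne : μs ≠ 0 := ne_of_gt hμs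
  have hdisc : 0 ≤ S ^ 2 - 4 / δ := by
    have hrw : S ^ 2 - 4 / δ
        = (1 - 1/δ) ^ 2 + (δ * Qb / μs) ^ 2 + 2 * (δ * Qb / μs) * (1 + 1/δ) := by
      rw [hS]; ring
    rw [hrw]; positivity
  set r := Real.sqrt (S ^ 2 - 4 / δ) with hr
  have hr0 : 0 ≤ r := Real.sqrt_nonneg _
  have hrsq : r ^ 2 = S ^ 2 - 4 / δ := Real.sq_sqrt hdisc
  -- quadratic relation
  have hquad : lamStar ^ 2 - S * lamStar + 1 / δ = 0 := by
    rw [hlamStar]; linear_combination hrsq / 4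
  -- lamStar < 1
  have hSgt : 1 + 1 / δ < S := by
    rw [hS]
    have : 0 < δ * Qb / μs := by positivity
    linarith
  have hδinv : 0 < 1 / δ := by positivity
  have hlt : lamStar < 1 := by
    have hrgt : S - 2 < r := by
      rcases le_or_gt r (S - 2) with h | h
      · exfalso
        have h2 : 0 < S - 2 := by
          have : 1 ≤ 1/δ ∨ 1/δ < 1 := le_or_gt 1 (1/δ)
          nlinarith
        nlinarith [hrsq]
      · exact h
    rw [hlamStar]; linarith
  have h1l : (0:ℝ) < 1 - lamStar := by linarith
  have h1lne : (1:ℝ) - lamStar ≠ 0 := ne_of_gt h1l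
  have hPbpos : 0 < Pb := by rw [hPb]; positivity
  have hne : μs + δ * Pb ≠ 0 := by positivity
  have he : Pb * (1 - lamStar) = Qb := by
    rw [hPb]; field_simp
  have key : Qb = (1/δ - lamStar) * (μs * (1 - lamStar) + δ * Qb) := by
    have hSδ : S * δ * μs = δ * μs + μs + δ ^ 2 * Qb := by
      rw [hS]; field_simp [hδne, hμne]
    have hrsq' : δ * r ^ 2 = δ * S ^ 2 - 4 := by
      rw [hrsq]; field_simp [hδne]
    have hq2 : lamStar ^ 2 * δ - S * δ * lamStar + 1 = 0 := by
      rw [hlamStar]; linear_combination hrsq' / 4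
    field_simp
    linear_combination (-μs) * hq2 + (-lamStar) * hSδ
  have key2 : Pb = (1/δ - lamStar) * (μs + δ * Pb) := by
    have h3 : Pb * (1 - lamStar) = ((1/δ - lamStar) * (μs + δ * Pb)) * (1 - lamStar) := by
      linear_combination (1 - (1/δ - lamStar) * δ) * he + key
    exact mul_right_cancel₀ h1lne h3
  have h4 : Pb / (μs + δ * Pb) = 1/δ - lamStar := by
    rw [div_eq_iff hne]; linear_combination key2
  linarith [h4]
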